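/- Let a < b be real numbers and let f : ℝ → ℝ be monotone nonincreasing on [a, b]. Then ∫_a^b ∫_a^b min(f(x), f(y)) dx dy = 2 ∫_a^b f(x)(x − a) dx. -/

import Mathlib

open MeasureTheory intervalIntegral Set

lemma abs_le_of_antitone {g : ℝ → ℝ} (hg : Antitone g) {a b x : ℝ}
    (hx : x ∈ Set.Icc a b) : |g x| ≤ max |g a| |g b| := by
  rcases abs_cases (g x) with ⟨h, _⟩ | ⟨h, _⟩
  · calc |g x| = g x := h
      _ ≤ g a := hg hx.1
      _ ≤ |g a| := le_abs_self _
      _ ≤ _ := le_max_left _ _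
  · calc |g x| = -g x := h
      _ ≤ -g b := by linarith [hg hx.2]
      _ ≤ |g b| := neg_le_abs _
      _ ≤ _ := le_max_right _ _

lemma swap_step (a b : ℝ) (hab : a ≤ b) (g : ℝ → ℝ) (hg : Antitone g) :
    (∫ y in a..b, ∫ x in y..b, g x) = ∫ x in a..b, g x * (x - a) := by
  have hgm : Measurable g := hg.measurable
  set μ := volume.restrict (Set.Ioc a b) with hμ
  set F : ℝ → ℝ → ℝ := fun y x => if y < x then g x else 0 with hF
  have hFmeas : Measurable (Function.uncurry F) := by
    apply Measurable.ite
    · exact measurableSet_lt measurable_fst measurable_snd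
    · exact hgm.comp measurable_snd
    · exact measurable_const
  have hFint : Integrable (Function.uncurry F) (μ.prod μ) := by
    refine (integrable_const (max |g a| |g b|)).mono' hFmeas.aestronglyMeasurable ?_
    rw [hμ, Measure.prod_restrict]
    filter_upwards [ae_restrict_mem (measurableSet_Ioc.prod measurableSet_Ioc)] with p hp
    rcases hp with ⟨_, hp2⟩
    by_cases h : p.1 < p.2
    · simpa [F, Function.uncurry, h] using abs_le_of_antitone hg ⟨hp2.1.le, hp2.2⟩
    · simp [F, Function.uncurry, h, le_max_iff, abs_nonneg]
  have key : (∫ y in Set.Ioc a b, ∫ x in Set.Ioc a b, F y x) =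
      ∫ x in Set.Ioc a b, ∫ y in Set.Ioc a b, F y x := integral_integral_swap hFint
  rw [intervalIntegral.integral_of_le hab, intervalIntegral.integral_of_le hab]
  have lhs_eq : (∫ y in Set.Ioc a b, ∫ x in y..b, g x) =
      ∫ y in Set.Ioc a b, ∫ x in Set.Ioc a b, F y x := by
    apply setIntegral_congr_fun measurableSet_Ioc
    intro y hy
    show (∫ x in y..b, g x) = ∫ x in Set.Ioc a b, F y x
    rw [intervalIntegral.integral_of_le hy.2]
    have h1 : (∫ x in Set.Ioc a b, F y x) = ∫ x in Set.Ioc a b, (Set.Ioc y b).indicator g x := by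
      apply setIntegral_congr_fun measurableSet_Ioc
      intro x hx
      simp only [F, Set.indicator_apply, Set.mem_Ioc]
      by_cases h : y < x
      · simp [h, hx.2]
      · simp [h]
    rw [h1, setIntegral_indicator measurableSet_Ioc,
      Set.Ioc_inter_Ioc, max_eq_right hy.1.le, min_self]
  have rhs_eq : (∫ x in Set.Ioc a b, ∫ y in Set.Ioc a b, F y x) =
      ∫ x in Set.Ioc a b, g x * (x - a) := by
    apply setIntegral_congr_fun measurableSet_Ioc
    intro x hx
    show (∫ y in Set.Ioc a b, F y x) = g x * (x - a)
    have h1 : (∫ y in Set.Ioc a b, F y x) =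
        ∫ y in Set.Ioc a b, (Set.Iio x).indicator (fun _ => g x) y := by
      apply setIntegral_congr_fun measurableSet_Ioc
      intro y _
      simp only [F, Set.indicator_apply, Set.mem_Iio]
    rw [h1, setIntegral_indicator measurableSet_Iio]
    have h2 : Set.Ioc a b ∩ Set.Iio x = Set.Ioo a x := by
      ext y
      simp only [Set.mem_inter_iff, Set.mem_Ioc, Set.mem_Iio, Set.mem_Ioo]
      constructor
      · rintro ⟨⟨h1, _⟩, h3⟩; exact ⟨h1, h3⟩
      · rintro ⟨h1, h3⟩; exact ⟨⟨h1, h3.le.trans hx.2⟩, h3⟩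
    rw [h2, setIntegral_const, Real.volume_real_Ioo_of_le (by linarith [hx.1]), smul_eq_mul,
      mul_comm]
  rw [lhs_eq, key, rhs_eq]

theorem qIntegral_antitone (a b : ℝ) (hab : a < b) (f : ℝ → ℝ)
    (hf : AntitoneOn f (Set.Icc a b)) :
    (∫ y in a..b, ∫ x in a..b, min (f x) (f y)) = 2 * ∫ x in a..b, f x * (x - a) := by
  -- extend f to a globally antitone function g
  set g : ℝ → ℝ := fun x => f (max a (min x b)) with hg_def
  have hproj : ∀ x, max a (min x b) ∈ Set.Icc a b := fun x =>
    ⟨le_max_left _ _, max_le hab.le (min_le_right _ _)⟩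
  have hg : Antitone g := by
    intro x y hxy
    exact hf (hproj x) (hproj y) (max_le_max le_rfl (min_le_min_right _ hxy))
  have hgf : Set.EqOn g f (Set.Icc a b) := by
    intro x hx
    simp only [hg_def]
    rw [min_eq_left hx.2, max_eq_right hx.1]
  have huIcc : Set.uIcc a b = Set.Icc a b := Set.uIcc_of_le hab.le
  -- transfer to g
  have hL : (∫ y in a..b, ∫ x in a..b, min (f x) (f y)) =
      ∫ y in a..b, ∫ x in a..b, min (g x) (g y) := by
    apply intervalIntegral.integral_congr
    intro y hy
    rw [huIcc] at hy
    apply intervalIntegral.integral_congr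
    intro x hx
    rw [huIcc] at hx
    show min (f x) (f y) = min (g x) (g y)
    rw [hgf hx, hgf hy]
  have hR : (∫ x in a..b, f x * (x - a)) = ∫ x in a..b, g x * (x - a) := by
    apply intervalIntegral.integral_congr
    intro x hx
    rw [huIcc] at hx
    show f x * (x - a) = g x * (x - a)
    rw [hgf hx]
  rw [hL, hR]
  -- inner integral computation
  have inner : ∀ y ∈ Set.Icc a b,
      (∫ x in a..b, min (g x) (g y)) = g y * (y - a) + ∫ x in y..b, g x := by
    intro y hy
    have hanti : Antitone (fun x => min (g x) (g y)) := hg.min antitone_const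
    have h1 : IntervalIntegrable (fun x => min (g x) (g y)) volume a y :=
      hanti.intervalIntegrable
    have h2 : IntervalIntegrable (fun x => min (g x) (g y)) volume y b :=
      hanti.intervalIntegrable
    rw [← intervalIntegral.integral_add_adjacent_intervals h1 h2]
    have e1 : (∫ x in a..y, min (g x) (g y)) = g y * (y - a) := by
      have : (∫ x in a..y, min (g x) (g y)) = ∫ _x in a..y, g y := by
        apply intervalIntegral.integral_congr
        intro x hx
        rw [Set.uIcc_of_le hy.1] at hx
        exact min_eq_right (hg hx.2)
      rw [this, intervalIntegral.integral_const, smul_eq_mul, mul_comm]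
    have e2 : (∫ x in y..b, min (g x) (g y)) = ∫ x in y..b, g x := by
      apply intervalIntegral.integral_congr
      intro x hx
      rw [Set.uIcc_of_le hy.2] at hx
      exact min_eq_left (hg hx.1)
    rw [e1, e2]
  have houter : (∫ y in a..b, ∫ x in a..b, min (g x) (g y)) =
      ∫ y in a..b, (g y * (y - a) + ∫ x in y..b, g x) := by
    apply intervalIntegral.integral_congr
    intro y hy
    rw [huIcc] at hy
    exact inner y hy
  rw [houter]
  have i1 : IntervalIntegrable (fun y => g y * (y - a)) volume a b :=
    hg.intervalIntegrable.mul_continuousOn (by fun_prop)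
  have i2 : IntervalIntegrable (fun y => ∫ x in y..b, g x) volume a b := by
    have hc : Continuous fun y => ∫ x in a..y, g x :=
      intervalIntegral.continuous_primitive (fun c d => hg.intervalIntegrable) a
    have : Continuous fun y => (∫ x in a..b, g x) - ∫ x in a..y, g x :=
      continuous_const.sub hc
    have heq : (fun y => ∫ x in y..b, g x) =
        fun y => (∫ x in a..b, g x) - ∫ x in a..y, g x := by
      funext y
      rw [intervalIntegral.integral_interval_sub_left hg.intervalIntegrable
        hg.intervalIntegrable]
    rw [heq]
    exact this.intervalIntegrable a b
  rw [intervalIntegral.integral_add i1 i2, swap_step a b hab.le g hg]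
  ring
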